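/- For all p ∈ (0,1), the point P₂ = ((1-(1-p)² + p)/3, -(2/3)log(1-p)) lies strictly above the line segment joining P₁ = ((1-(1-p) + 2p)/3, -(1/3)log(1-p)) = (p, -(1/3)log(1-p)) and P₄ = ((1-(1-p)³)/3, -log(1-p)) in the (τ,λ) plane; i.e., the a=2 scheme improves the convex hull of the a=1 and a=3 schemes for block size d=3. -/

import Mathlib

/-- For every `p ∈ (0,1)`, the point `P₂ = (τ(2), λ(2))` of the `a = 2` block-size-3
scheme lies strictly above the segment joining `P₁ = (τ(1), λ(1)) = (p, -(1/3)log(1-p))`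
and `P₄ = (τ(3), λ(3)) = ((1-(1-p)³)/3, -log(1-p))`, where
`τ(a) = (1-(1-p)^a + (3-a)p)/3` and `λ(a) = -(a/3)log(1-p)`. -/
theorem stmt17 (p : ℝ) (hp0 : 0 < p) (hp1 : p < 1) :
    (-(1 / 3) * Real.log (1 - p)) +
        ((-Real.log (1 - p)) - (-(1 / 3) * Real.log (1 - p))) *
          (((1 - (1 - p) ^ 2 + 1 * p) / 3 - (1 - (1 - p) ^ 1 + 2 * p) / 3) /
            ((1 - (1 - p) ^ 3 + 0 * p) / 3 - (1 - (1 - p) ^ 1 + 2 * p) / 3)) <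
      -(2 / 3) * Real.log (1 - p) := by
  have h3p : (0:ℝ) < 3 - p := by linarith
  have hp : p ≠ 0 := ne_of_gt hp0
  have hr : (((1 - (1 - p) ^ 2 + 1 * p) / 3 - (1 - (1 - p) ^ 1 + 2 * p) / 3) /
            ((1 - (1 - p) ^ 3 + 0 * p) / 3 - (1 - (1 - p) ^ 1 + 2 * p) / 3)) = 1/(3-p) := by
    have hnum : ((1 - (1 - p) ^ 2 + 1 * p) / 3 - (1 - (1 - p) ^ 1 + 2 * p) / 3)
        = -(p^2)/3 := by ring
    have hden : ((1 - (1 - p) ^ 3 + 0 * p) / 3 - (1 - (1 - p) ^ 1 + 2 * p) / 3)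
        = -(p^2*(3-p))/3 := by ring
    rw [hnum, hden]
    field_simp
  rw [hr]
  have hL : Real.log (1 - p) < 0 := Real.log_neg (by linarith) (by linarith)
  have hhalf : 1/(3-p) < 1/2 := by
    rw [div_lt_div_iff₀ h3p (by norm_num)]
    linarith
  have hpos : 0 < 1/(3-p) := by positivity
  nlinarith [mul_pos (neg_pos.mpr hL) hpos, mul_lt_mul_of_pos_left hhalf (neg_pos.mpr hL)]
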